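/- arXiv:2601.05896 — 4 statements merged into one kernel-verified Lean document; each statement's English description precedes it below -/
import Mathlib

section
/- For every complex number s and every integer k ≥ 1, the absolute value of the k-th falling factorial of s divided by k! is at most |s| · k^{|s+1|}; that is, |(s)_k / k!| ≤ |s| · k^{|s+1|}. -/
lemma harmonic_tail_le_log (m : ℕ) :
    ∑ i ∈ Finset.range m, (1 : ℝ) / (i + 2) ≤ Real.log (m + 1) := by
  have key : ∀ i : ℕ, (1 : ℝ) / (i + 2) ≤
      Real.log ((i + 1 : ℕ) + 1) - Real.log ((i : ℕ) + 1) := by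
    intro i
    have h2 : (0 : ℝ) < (i : ℝ) + 2 := by positivity
    have hx : (0 : ℝ) < ((i : ℝ) + 1) / ((i : ℝ) + 2) := by positivity
    have h := Real.log_le_sub_one_of_pos hx
    rw [Real.log_div (by positivity) (by positivity)] at h
    have heq : ((i : ℝ) + 1) / ((i : ℝ) + 2) - 1 = -(1 / ((i : ℝ) + 2)) := by
      field_simp
      norm_num
    push_cast
    have h22 : ((i : ℝ) + 1 + 1) = (i : ℝ) + 2 := by ring
    rw [h22]
    linarith [heq]
  calc ∑ i ∈ Finset.range m, (1 : ℝ) / (i + 2)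
      ≤ ∑ i ∈ Finset.range m,
        (Real.log ((i + 1 : ℕ) + 1) - Real.log ((i : ℕ) + 1)) :=
        Finset.sum_le_sum fun i _ => key i
    _ = Real.log ((m : ℕ) + 1) - Real.log ((0 : ℕ) + 1) :=
        Finset.sum_range_sub (fun n => Real.log ((n : ℕ) + 1)) m
    _ ≤ Real.log (m + 1) := by norm_num

lemma tail_prod_le (s : ℂ) (m : ℕ) :
    ∏ i ∈ Finset.range m, ‖s - (i + 1)‖ / (i + 2) ≤
      ((m : ℝ) + 1) ^ (‖s + 1‖) := by
  set a := ‖s + 1‖ with ha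
  have step : ∀ i : ℕ, ‖s - (i + 1)‖ / (i + 2) ≤
      Real.exp (a / (i + 2)) := by
    intro i
    have h2 : (0 : ℝ) < (i : ℝ) + 2 := by positivity
    have habs : ‖s - (i + 1)‖ ≤ a + ((i : ℝ) + 2) := by
      have hs : s - (i + 1) = (s + 1) - ((((i : ℝ) + 2 : ℝ)) : ℂ) := by
        push_cast; ring
      rw [hs]
      calc ‖(s + 1) - ((((i : ℝ) + 2 : ℝ)) : ℂ)‖
          ≤ ‖s + 1‖ + ‖((((i : ℝ) + 2 : ℝ)) : ℂ)‖ :=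
            (norm_sub_le _ _)
        _ = a + ((i : ℝ) + 2) := by
            rw [Complex.norm_real, Real.norm_eq_abs, abs_of_pos h2]
    have h3 : ‖s - (i + 1)‖ / (i + 2) ≤ a / ((i : ℝ) + 2) + 1 := by
      rw [div_add' _ _ _ (ne_of_gt h2), one_mul]
      gcongr
    calc ‖s - (i + 1)‖ / (i + 2) ≤ a / ((i : ℝ) + 2) + 1 := h3
      _ ≤ Real.exp (a / (i + 2)) := Real.add_one_le_exp _
  have hprod : ∏ i ∈ Finset.range m, ‖s - (i + 1)‖ / (i + 2) ≤
      ∏ i ∈ Finset.range m, Real.exp (a / (i + 2)) := by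
    apply Finset.prod_le_prod
    · intro i _; positivity
    · intro i _; exact step i
  have hexp : ∏ i ∈ Finset.range m, Real.exp (a / (i + 2)) =
      Real.exp (∑ i ∈ Finset.range m, a / (i + 2)) := (Real.exp_sum _ _).symm
  have hsum : ∑ i ∈ Finset.range m, a / ((i : ℝ) + 2) =
      a * ∑ i ∈ Finset.range m, 1 / ((i : ℝ) + 2) := by
    rw [Finset.mul_sum]; congr 1; ext i; ring
  have hle : ∑ i ∈ Finset.range m, a / ((i : ℝ) + 2) ≤ a * Real.log (m + 1) := by
    rw [hsum]
    exact mul_le_mul_of_nonneg_left (harmonic_tail_le_log m) (norm_nonneg _)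
  have hrpow : ((m : ℝ) + 1) ^ a = Real.exp (a * Real.log (m + 1)) := by
    rw [Real.rpow_def_of_pos (by positivity), mul_comm]
  calc ∏ i ∈ Finset.range m, ‖s - (i + 1)‖ / (i + 2)
      ≤ Real.exp (∑ i ∈ Finset.range m, a / (i + 2)) := hexp ▸ hprod
    _ ≤ Real.exp (a * Real.log (m + 1)) := Real.exp_le_exp.mpr hle
    _ = ((m : ℝ) + 1) ^ a := hrpow.symm

/-- |(s)_k / k!| ≤ |s| · k^{|s+1|} for k ≥ 1, where (s)_k = ∏_{j=0}^{k-1}(s-j). -/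
theorem falling_factorial_div_factorial_bound (s : ℂ) (k : ℕ) (hk : 1 ≤ k) :
    ‖(∏ j ∈ Finset.range k, (s - j)) / (k.factorial : ℂ)‖ ≤
      ‖s‖ * (k : ℝ) ^ (‖s + 1‖) := by
  obtain ⟨m, rfl⟩ : ∃ m, k = m + 1 := ⟨k - 1, (Nat.succ_pred_eq_of_pos hk).symm⟩
  have hfac : ((m + 1).factorial : ℝ) = ∏ j ∈ Finset.range (m + 1), ((j : ℝ) + 1) := by
    rw [← Finset.prod_range_add_one_eq_factorial]
    push_cast; rfl
  have hLHS : ‖(∏ j ∈ Finset.range (m + 1), (s - j)) / ((m + 1).factorial : ℂ)‖ =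
      ∏ j ∈ Finset.range (m + 1), ‖s - j‖ / ((j : ℝ) + 1) := by
    rw [norm_div, norm_prod, Complex.norm_natCast, hfac, Finset.prod_div_distrib]
  rw [hLHS, Finset.prod_range_succ']
  simp only [Nat.cast_zero, sub_zero, Nat.cast_add, Nat.cast_one]
  have htail : ∏ i ∈ Finset.range m, ‖s - ((i : ℂ) + 1)‖ / ((i : ℝ) + 1 + 1) ≤
      ((m : ℝ) + 1) ^ (‖s + 1‖) := by
    have heq : ∀ i : ℕ, ((i : ℝ) + 1 + 1) = (i : ℝ) + 2 := fun i => by ring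
    simp only [heq]
    exact tail_prod_le s m
  calc (∏ i ∈ Finset.range m, ‖s - ((i : ℂ) + 1)‖ / ((i : ℝ) + 1 + 1)) *
        (‖s‖ / (0 + 1))
      ≤ ((m : ℝ) + 1) ^ (‖s + 1‖) * (‖s‖ / (0 + 1)) := by
        apply mul_le_mul_of_nonneg_right htail
        positivity
    _ = ‖s‖ * ((m : ℝ) + 1) ^ (‖s + 1‖) := by ring
end

section
/- Let (a_n) be complex numbers and (c_n) complex numbers with |c_n| ≤ 1, and suppose ∑_{n=1}^∞ |a_n| |c_n|^{Re s} converges for all s with Re(s) > S_0. Let σ > 0, σ_{N+1} > 0, C > 0, and suppose |𝓔_k(c_n)| ≤ C |c_n|^{σ_{N+1}} k 2^{-(k-1)} for all k ≥ 1 and n ≥ ν. Then the double series ∑_{k=1}^∞ ((s)_k / k!) ∑_{n=ν}^∞ a_n c_n^{σ s} 𝓔_k(c_n) converges absolutely for every s with Re(s) > (S_0 - σ_{N+1})/σ, and the sum is holomorphic on this half-plane. -/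
open Finset

set_option maxHeartbeats 1000000

lemma prod_range_add_eq_ascFactorial' (m : ℕ) :
    ∀ k : ℕ, ∏ j ∈ Finset.range k, (m + j) = m.ascFactorial k
  | 0 => rfl
  | k + 1 => by
      rw [Finset.prod_range_succ, prod_range_add_eq_ascFactorial' m k, Nat.ascFactorial_succ,
        mul_comm]

lemma aux_summable' (R : ℝ) (hR : 0 ≤ R) :
    Summable (fun k : ℕ =>
      (∏ j ∈ Finset.range (k+1), (R + j)) / ((k+1).factorial : ℝ) * ((k+1) * (1/2:ℝ)^k)) := by
  set t := ⌈R⌉₊ with ht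
  have hRt : R ≤ (t:ℝ) + 1 := le_trans (Nat.le_ceil R) (by linarith)
  have key : ∀ k : ℕ, (∏ j ∈ Finset.range (k+1), (R + j)) / ((k+1).factorial : ℝ) *
      ((k+1) * (1/2:ℝ)^k) ≤ ((k + (t+1) : ℕ) : ℝ)^(t+1) * (1/2:ℝ)^k := by
    intro k
    have hprod : (∏ j ∈ Finset.range (k+1), (R + j)) ≤
        (((k+1).factorial : ℕ) : ℝ) * ((t + k + 1).choose (k+1) : ℝ) := by
      calc (∏ j ∈ Finset.range (k+1), (R + j))
          ≤ ∏ j ∈ Finset.range (k+1), (((t + 1 + j : ℕ)) : ℝ) := by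
            apply Finset.prod_le_prod
            · intro j _; positivity
            · intro j _; push_cast; linarith
        _ = (((∏ j ∈ Finset.range (k+1), (t + 1 + j)) : ℕ) : ℝ) := by push_cast; rfl
        _ = (((k+1).factorial * (t + k + 1).choose (k+1) : ℕ) : ℝ) := by
            rw [prod_range_add_eq_ascFactorial', Nat.ascFactorial_eq_factorial_mul_choose]
            congr 3
        _ = _ := by push_cast; ring
    have hfac : (0:ℝ) < ((k+1).factorial : ℝ) := by positivity
    have hdiv : (∏ j ∈ Finset.range (k+1), (R + j)) / ((k+1).factorial : ℝ) ≤
        ((t + k + 1).choose (k+1) : ℝ) := by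
      rw [div_le_iff₀ hfac]; rw [mul_comm] at hprod ⊢
      calc (∏ j ∈ Finset.range (k+1), (R + j)) ≤ _ := hprod
        _ = _ := by ring
    have hchoose : ((t + k + 1).choose (k+1) : ℝ) ≤ ((t + k + 1 : ℕ) : ℝ)^t := by
      have h : (t + k + 1).choose (k+1) = (t + k + 1).choose t := by
        apply Nat.choose_symm_of_eq_add; omega
      rw [h]
      exact_mod_cast Nat.cast_le.2 (Nat.choose_le_pow _ _)
    have h1 : ((k:ℝ)+1) ≤ ((t + k + 1 : ℕ) : ℝ) := by
      push_cast; linarith [Nat.cast_nonneg (α := ℝ) t]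
    have hp : (0:ℝ) ≤ (1/2:ℝ)^k := by positivity
    have heq : t + k + 1 = k + (t+1) := by omega
    calc (∏ j ∈ Finset.range (k+1), (R + j)) / ((k+1).factorial : ℝ) * ((k+1) * (1/2:ℝ)^k)
        ≤ ((t + k + 1 : ℕ) : ℝ)^t * (((t + k + 1 : ℕ) : ℝ) * (1/2:ℝ)^k) :=
          mul_le_mul (hdiv.trans hchoose) (mul_le_mul_of_nonneg_right h1 hp)
            (by positivity) (by positivity)
      _ = ((t + k + 1 : ℕ) : ℝ)^(t+1) * (1/2:ℝ)^k := by ring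
      _ = ((k + (t+1) : ℕ) : ℝ)^(t+1) * (1/2:ℝ)^k := by rw [heq]
  have h0 : Summable (fun n : ℕ => (n:ℝ)^(t+1) * (1/2:ℝ)^n) :=
    summable_pow_mul_geometric_of_norm_lt_one (t+1)
      (by rw [Real.norm_eq_abs, abs_of_pos] <;> norm_num)
  have h1 : Summable (fun k : ℕ => ((k + (t+1) : ℕ):ℝ)^(t+1) * (1/2:ℝ)^(k + (t+1))) :=
    (summable_nat_add_iff (t+1)).2 h0
  have h2 : Summable (fun k : ℕ => ((k + (t+1) : ℕ):ℝ)^(t+1) * (1/2:ℝ)^k) := by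
    apply (h1.mul_left ((2:ℝ)^(t+1))).congr
    intro k
    have h4 : (2:ℝ)^(t+1) * ((1:ℝ)/2)^(t+1) = 1 := by rw [← mul_pow]; norm_num
    have h5 : ((1:ℝ)/2)^(k+(t+1)) = (1/2)^k * (1/2)^(t+1) := pow_add _ _ _
    rw [h5]
    linear_combination ((k + (t+1) : ℕ):ℝ)^(t+1) * (1/2:ℝ)^k * h4
  apply Summable.of_nonneg_of_le ?_ key h2
  intro k
  have h3 : (0:ℝ) ≤ ∏ j ∈ Finset.range (k+1), (R + j) :=
    Finset.prod_nonneg fun j _ => by positivity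
  positivity

lemma poly_bound' (s : ℂ) (R : ℝ) (hs : ‖s‖ ≤ R) (k : ℕ) :
    ‖(∏ j ∈ Finset.range (k+1), (s - j)) / ((k+1).factorial : ℂ)‖ ≤
      (∏ j ∈ Finset.range (k+1), (R + j)) / ((k+1).factorial : ℝ) := by
  rw [norm_div, norm_prod, Complex.norm_natCast]
  have hfac : (0:ℝ) < ((k+1).factorial : ℝ) := by positivity
  rw [div_le_div_iff_of_pos_right hfac]
  apply Finset.prod_le_prod (fun j _ => norm_nonneg _)
  intro j _
  calc ‖s - j‖ ≤ ‖s‖ + ‖(j:ℂ)‖ := by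
        simpa using norm_sub_le s (j:ℂ)
    _ ≤ R + j := by rw [Complex.norm_natCast]; exact add_le_add_left hs _

/-- The part of the Dirichlet series coming from the error terms 𝓔_k is absolutely
convergent and holomorphic on the half-plane Re(s) > (S₀ - σ_{N+1})/σ. -/
theorem error_part_holomorphic (a : ℕ → ℂ) (c : ℕ → ℂ) (hc : ∀ n, ‖c n‖ ≤ 1)
    (S₀ : ℝ)
    (hconv : ∀ s : ℂ, S₀ < s.re →
      Summable (fun n : ℕ => ‖a n‖ * ‖c n‖ ^ s.re))
    (σ σN1 C : ℝ) (hσ : 0 < σ) (hσN1 : 0 < σN1) (hC : 0 < C)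
    (𝓔 : ℕ → ℂ → ℂ) (ν : ℕ)
    (h𝓔 : ∀ k : ℕ, 1 ≤ k → ∀ n : ℕ, ν ≤ n →
      ‖𝓔 k (c n)‖ ≤
        C * ‖c n‖ ^ σN1 * k * (1 / 2 : ℝ) ^ (k - 1)) :
    (∀ s : ℂ, (S₀ - σN1) / σ < s.re →
      Summable (fun p : ℕ × ℕ =>
        ‖
          (((∏ j ∈ Finset.range (p.1 + 1), (s - j)) / ((p.1 + 1).factorial : ℂ)) *
            (a (p.2 + ν) * (c (p.2 + ν)) ^ ((σ : ℂ) * s) * 𝓔 (p.1 + 1) (c (p.2 + ν))))‖)) ∧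
    DifferentiableOn ℂ
      (fun s : ℂ => ∑' k : ℕ,
        ((∏ j ∈ Finset.range (k + 1), (s - j)) / ((k + 1).factorial : ℂ)) *
          ∑' n : ℕ, a (n + ν) * (c (n + ν)) ^ ((σ : ℂ) * s) * 𝓔 (k + 1) (c (n + ν)))
      {s : ℂ | (S₀ - σN1) / σ < s.re} := by
  -- error terms vanish when c = 0
  have hE0 : ∀ k n : ℕ, c (n + ν) = 0 → 𝓔 (k + 1) (c (n + ν)) = 0 := by
    intro k n hz
    have h := h𝓔 (k+1) le_add_self (n+ν) (Nat.le_add_left ν n)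
    rw [hz] at h ⊢
    simp only [norm_zero, Real.zero_rpow hσN1.ne', mul_zero, zero_mul] at h
    exact norm_eq_zero.1 (le_antisymm h (norm_nonneg _))
  -- the key pointwise bound on the inner terms
  have key : ∀ (s : ℂ) (R r : ℝ), 0 ≤ R → ‖s‖ ≤ R → r ≤ σ * s.re → ∀ k n : ℕ,
      ‖a (n+ν) * (c (n+ν)) ^ ((σ:ℂ)*s) * 𝓔 (k+1) (c (n+ν))‖ ≤
        (C * Real.exp (Real.pi * (σ * R)) * ((k+1) * (1/2:ℝ)^k)) *
          (‖a (n+ν)‖ * ‖c (n+ν)‖ ^ (r + σN1)) := by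
    intro s R r hR hsR hrs k n
    have hE := h𝓔 (k+1) le_add_self (n+ν) (Nat.le_add_left ν n)
    simp only [Nat.add_sub_cancel, Nat.cast_add, Nat.cast_one] at hE
    by_cases hz : c (n + ν) = 0
    · rw [hE0 k n hz, mul_zero, norm_zero]
      positivity
    · have hzpos : 0 < ‖c (n+ν)‖ := norm_pos_iff.2 hz
      have hz1 : ‖c (n+ν)‖ ≤ 1 := hc (n+ν)
      have hcpow : ‖(c (n+ν)) ^ ((σ:ℂ)*s)‖ ≤
          ‖c (n+ν)‖ ^ r * Real.exp (Real.pi * (σ * R)) := by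
        rw [Complex.norm_cpow_of_ne_zero hz]
        have hre : ((σ:ℂ)*s).re = σ * s.re := by
          simp [Complex.mul_re]
        have him : ((σ:ℂ)*s).im = σ * s.im := by
          simp [Complex.mul_im]
        rw [hre, div_eq_mul_inv, ← Real.exp_neg]
        have b1 : ‖c (n+ν)‖ ^ (σ * s.re) ≤ ‖c (n+ν)‖ ^ r :=
          Real.rpow_le_rpow_of_exponent_ge hzpos hz1 hrs
        have b2 : Real.exp (-((c (n+ν)).arg * ((σ:ℂ)*s).im)) ≤ Real.exp (Real.pi * (σ * R)) := by
          apply Real.exp_le_exp.2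
          have harg : |(c (n+ν)).arg| ≤ Real.pi := Complex.abs_arg_le_pi _
          have him' : |((σ:ℂ)*s).im| ≤ σ * R := by
            rw [him, abs_mul, abs_of_pos hσ]
            exact mul_le_mul_of_nonneg_left ((Complex.abs_im_le_norm s).trans hsR) hσ.le
          calc -((c (n+ν)).arg * ((σ:ℂ)*s).im) ≤ |(c (n+ν)).arg * ((σ:ℂ)*s).im| :=
                neg_le_abs _
            _ = |(c (n+ν)).arg| * |((σ:ℂ)*s).im| := abs_mul _ _
            _ ≤ Real.pi * (σ * R) := by
                apply mul_le_mul harg him' (abs_nonneg _) Real.pi_pos.le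
        exact mul_le_mul b1 b2 (Real.exp_pos _).le (by positivity)
      rw [norm_mul, norm_mul]
      calc ‖a (n+ν)‖ * ‖(c (n+ν)) ^ ((σ:ℂ)*s)‖ *
            ‖𝓔 (k+1) (c (n+ν))‖
          ≤ ‖a (n+ν)‖ * (‖c (n+ν)‖ ^ r * Real.exp (Real.pi * (σ * R))) *
            (C * ‖c (n+ν)‖ ^ σN1 * ((k:ℝ)+1) * (1/2:ℝ)^k) := by
            apply mul_le_mul (mul_le_mul_of_nonneg_left hcpow (norm_nonneg _)) hE
              (norm_nonneg _) (by positivity)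
        _ = (C * Real.exp (Real.pi * (σ * R)) * ((k+1) * (1/2:ℝ)^k)) *
            (‖a (n+ν)‖ * ‖c (n+ν)‖ ^ (r + σN1)) := by
            rw [Real.rpow_add hzpos]
            ring
  -- summability of the n-part
  have hΨ : ∀ r : ℝ, S₀ < r + σN1 →
      Summable (fun n : ℕ => ‖a (n+ν)‖ * ‖c (n+ν)‖ ^ (r + σN1)) := by
    intro r hr
    have h := hconv ((r + σN1 : ℝ) : ℂ) (by simpa using hr)
    simp only [Complex.ofReal_re] at h
    exact (summable_nat_add_iff ν).2 h
  constructor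
  · -- Part 1: absolute convergence
    intro s hs
    set R := ‖s‖ with hR
    set r := σ * s.re with hr
    have hR0 : 0 ≤ R := norm_nonneg s
    have hrS : S₀ < r + σN1 := by
      have h := (div_lt_iff₀ hσ).1 hs
      rw [hr]; nlinarith
    have hf : Summable (fun k : ℕ =>
        ((∏ j ∈ Finset.range (k+1), (R + j)) / ((k+1).factorial : ℝ) * ((k+1) * (1/2:ℝ)^k)) *
          (C * Real.exp (Real.pi * (σ * R)))) :=
      (aux_summable' R hR0).mul_right _
    have hg := hΨ r hrS
    have hfg := hf.mul_of_nonneg hg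
      (fun k => by
        have h3 : (0:ℝ) ≤ ∏ j ∈ Finset.range (k+1), (R + j) :=
          Finset.prod_nonneg fun j _ => by positivity
        positivity)
      (fun n => by positivity)
    apply Summable.of_nonneg_of_le (fun p => norm_nonneg _) ?_ hfg
    rintro ⟨k, n⟩
    simp only
    rw [norm_mul]
    calc ‖(∏ j ∈ Finset.range (k+1), (s - j)) / ((k+1).factorial : ℂ)‖ *
          ‖a (n+ν) * (c (n+ν)) ^ ((σ:ℂ)*s) * 𝓔 (k+1) (c (n+ν))‖
        ≤ ((∏ j ∈ Finset.range (k+1), (R + j)) / ((k+1).factorial : ℝ)) *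
          ((C * Real.exp (Real.pi * (σ * R)) * ((k+1) * (1/2:ℝ)^k)) *
            (‖a (n+ν)‖ * ‖c (n+ν)‖ ^ (r + σN1))) := by
          apply mul_le_mul (poly_bound' s R le_rfl k) (key s R r hR0 le_rfl le_rfl k n)
            (norm_nonneg _) ?_
          have h3 : (0:ℝ) ≤ ∏ j ∈ Finset.range (k+1), (R + j) :=
            Finset.prod_nonneg fun j _ => by positivity
          positivity
      _ = _ := by ring
  · -- Part 2: holomorphy
    intro s₀ hs₀
    simp only [Set.mem_setOf_eq] at hs₀
    set R := ‖s₀‖ + 1 with hRdef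
    set r := (σ * s₀.re + (S₀ - σN1))/2 with hrdef
    have hR0 : 0 ≤ R := by positivity
    have h1 : S₀ - σN1 < σ * s₀.re := by
      have h := (div_lt_iff₀ hσ).1 hs₀
      nlinarith
    have hrS : S₀ < r + σN1 := by rw [hrdef]; linarith
    have hrs₀ : r < σ * s₀.re := by rw [hrdef]; linarith
    set V : Set ℂ := {s : ℂ | ‖s‖ < R} ∩ {s : ℂ | r < σ * s.re} with hVdef
    have hVopen : IsOpen V := by
      apply IsOpen.inter
      · exact isOpen_lt continuous_norm continuous_const
      · exact isOpen_lt continuous_const (continuous_const.mul Complex.continuous_re)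
    have hs₀V : s₀ ∈ V := ⟨by simp [hRdef], hrs₀⟩
    have hVU : V ⊆ {s : ℂ | (S₀ - σN1) / σ < s.re} := by
      rintro s ⟨-, hs2⟩
      simp only [Set.mem_setOf_eq] at hs2 ⊢
      rw [div_lt_iff₀ hσ]
      nlinarith
    have hg := hΨ r hrS
    set A := ∑' n : ℕ, ‖a (n+ν)‖ * ‖c (n+ν)‖ ^ (r + σN1) with hAdef
    have hA0 : 0 ≤ A := tsum_nonneg fun n => by positivity
    -- differentiability of the inner terms
    have hFd : ∀ k n : ℕ, DifferentiableOn ℂ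
        (fun s : ℂ => a (n+ν) * (c (n+ν)) ^ ((σ:ℂ)*s) * 𝓔 (k+1) (c (n+ν))) V := by
      intro k n
      by_cases hz : c (n + ν) = 0
      · simp only [hE0 k n hz, mul_zero]
        exact differentiableOn_const 0
      · exact (((differentiable_const _).mul
          ((differentiable_id.const_mul ((σ:ℂ))).const_cpow (Or.inl hz))).mul
            (differentiable_const _)).differentiableOn
    -- inner sums are differentiable on V
    have hInner : ∀ k : ℕ, DifferentiableOn ℂ
        (fun s : ℂ => ∑' n : ℕ, a (n+ν) * (c (n+ν)) ^ ((σ:ℂ)*s) * 𝓔 (k+1) (c (n+ν))) V := by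
      intro k
      apply Complex.differentiableOn_tsum_of_summable_norm
        (u := fun n => (C * Real.exp (Real.pi * (σ * R)) * ((k+1) * (1/2:ℝ)^k)) *
          (‖a (n+ν)‖ * ‖c (n+ν)‖ ^ (r + σN1)))
        (hg.mul_left _) (hFd k) hVopen
      intro n w hw
      exact key w R r hR0 hw.1.le hw.2.le k n
    -- norms of the inner sums
    have hInnerBound : ∀ k : ℕ, ∀ w ∈ V,
        ‖∑' n : ℕ, a (n+ν) * (c (n+ν)) ^ ((σ:ℂ)*w) * 𝓔 (k+1) (c (n+ν))‖ ≤
          (C * Real.exp (Real.pi * (σ * R)) * ((k+1) * (1/2:ℝ)^k)) * A := by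
      intro k w hw
      have hb : ∀ n : ℕ, ‖a (n+ν) * (c (n+ν)) ^ ((σ:ℂ)*w) * 𝓔 (k+1) (c (n+ν))‖ ≤
          (C * Real.exp (Real.pi * (σ * R)) * ((k+1) * (1/2:ℝ)^k)) *
            (‖a (n+ν)‖ * ‖c (n+ν)‖ ^ (r + σN1)) := by
        intro n
        exact key w R r hR0 hw.1.le hw.2.le k n
      have hsn : Summable (fun n : ℕ =>
          ‖a (n+ν) * (c (n+ν)) ^ ((σ:ℂ)*w) * 𝓔 (k+1) (c (n+ν))‖) :=
        Summable.of_nonneg_of_le (fun n => norm_nonneg _) hb (hg.mul_left _)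
      calc ‖∑' n : ℕ, a (n+ν) * (c (n+ν)) ^ ((σ:ℂ)*w) * 𝓔 (k+1) (c (n+ν))‖
          ≤ ∑' n : ℕ, ‖a (n+ν) * (c (n+ν)) ^ ((σ:ℂ)*w) * 𝓔 (k+1) (c (n+ν))‖ :=
            norm_tsum_le_tsum_norm hsn
        _ ≤ ∑' n : ℕ, (C * Real.exp (Real.pi * (σ * R)) * ((k+1) * (1/2:ℝ)^k)) *
              (‖a (n+ν)‖ * ‖c (n+ν)‖ ^ (r + σN1)) :=
            Summable.tsum_le_tsum hb hsn (hg.mul_left _)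
        _ = _ := by rw [tsum_mul_left]
    -- assemble the outer sum
    have hmain : DifferentiableOn ℂ
        (fun s : ℂ => ∑' k : ℕ,
          ((∏ j ∈ Finset.range (k + 1), (s - j)) / ((k + 1).factorial : ℂ)) *
            ∑' n : ℕ, a (n + ν) * (c (n + ν)) ^ ((σ : ℂ) * s) * 𝓔 (k + 1) (c (n + ν))) V := by
      apply Complex.differentiableOn_tsum_of_summable_norm
        (u := fun k => ((∏ j ∈ Finset.range (k+1), (R + j)) / ((k+1).factorial : ℝ) *
          ((k+1) * (1/2:ℝ)^k)) * ((C * Real.exp (Real.pi * (σ * R))) * A))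
        (((aux_summable' R hR0)).mul_right _) ?_ hVopen ?_
      · intro k
        apply DifferentiableOn.mul ?_ (hInner k)
        apply Differentiable.differentiableOn
        apply Differentiable.div_const
        apply Differentiable.fun_finsetProd
        intro j _
        exact differentiable_id.sub_const _
      · intro k w hw
        rw [norm_mul]
        calc ‖(∏ j ∈ Finset.range (k+1), (w - j)) / ((k+1).factorial : ℂ)‖ *
              ‖∑' n : ℕ, a (n+ν) * (c (n+ν)) ^ ((σ:ℂ)*w) * 𝓔 (k+1) (c (n+ν))‖
            ≤ ((∏ j ∈ Finset.range (k+1), (R + j)) / ((k+1).factorial : ℝ)) *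
              ((C * Real.exp (Real.pi * (σ * R)) * ((k+1) * (1/2:ℝ)^k)) * A) := by
              apply mul_le_mul ?_ (hInnerBound k w hw) (norm_nonneg _) ?_
              · exact poly_bound' w R hw.1.le k
              · have h3 : (0:ℝ) ≤ ∏ j ∈ Finset.range (k+1), (R + j) :=
                  Finset.prod_nonneg fun j _ => by positivity
                positivity
          _ = _ := by ring
    exact ((hmain.differentiableAt (hVopen.mem_nhds hs₀V)).differentiableWithinAt)
end

section
/- Let α_1,…,α_N ∈ ℂ, 0 < σ_1 < ⋯ < σ_{N+1}, and δ > 0 with ∑_{j=1}^N |α_j| δ^{σ_j} ≤ 1/2. Let k* = ⌈σ_{N+1}/σ_1⌉, and let 0 ≤ t < δ. Then for every k > k*, ∑_{k_1+⋯+k_N = k} (k choose k_1,…,k_N) (∏_j |α_j|^{k_j}) t^{∑_j σ_j k_j} ≤ 2^{-k} δ^{-σ_{N+1}} t^{σ_{N+1}}. -/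
/-- Tail multinomial estimate: for k > k* = ⌈σ_{N+1}/σ₁⌉ and 0 ≤ t < δ with
∑_j |α_j| δ^{σ_j} ≤ 1/2, one has
∑_{k₁+⋯+k_N=k} (k choose k⃗) ∏|α_j|^{k_j} t^{∑σ_j k_j} ≤ 2^{-k} δ^{-σ_{N+1}} t^{σ_{N+1}}. -/
theorem tail_multinomial_estimate (N : ℕ) (α : Fin N → ℂ) (σ : Fin (N + 1) → ℝ)
    (hσ : StrictMono σ) (hσ0 : 0 < σ 0) (δ : ℝ) (hδ : 0 < δ)
    (hsmall : ∑ j, ‖α j‖ * δ ^ σ j.castSucc ≤ 1 / 2)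
    (t : ℝ) (ht0 : 0 ≤ t) (htδ : t < δ)
    (k : ℕ) (hk : ⌈σ (Fin.last N) / σ 0⌉₊ < k) :
    ∑ f ∈ Finset.Nat.antidiagonalTuple N k,
        (Nat.multinomial Finset.univ f : ℝ) * (∏ j, ‖α j‖ ^ f j) *
          t ^ (∑ j, σ j.castSucc * (f j : ℝ)) ≤
      (2 : ℝ) ^ (-(k : ℝ)) * δ ^ (-σ (Fin.last N)) * t ^ σ (Fin.last N) := by
  set S := σ (Fin.last N) with hS
  have hSpos : 0 < S := lt_of_lt_of_le hσ0 (hσ.monotone (Fin.zero_le _))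
  have hkS : S < σ 0 * k := by
    have h1 : S / σ 0 < k := lt_of_le_of_lt (Nat.le_ceil _) (by exact_mod_cast hk)
    calc S = σ 0 * (S / σ 0) := by field_simp
    _ < σ 0 * k := by exact mul_lt_mul_of_pos_left h1 hσ0
  -- termwise bound
  have key : ∀ f ∈ Finset.Nat.antidiagonalTuple N k,
      (Nat.multinomial Finset.univ f : ℝ) * (∏ j, ‖α j‖ ^ f j) *
          t ^ (∑ j, σ j.castSucc * (f j : ℝ)) ≤
      (Nat.multinomial Finset.univ f : ℝ) *
          (∏ j, (‖α j‖ * δ ^ σ j.castSucc) ^ f j) * ((t / δ) ^ S) := by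
    intro f hf
    have hfk : ∑ j, f j = k := (Finset.Nat.mem_antidiagonalTuple.mp hf)
    set s := ∑ j, σ j.castSucc * (f j : ℝ) with hs
    have hσj : ∀ j : Fin N, 0 < σ j.castSucc := fun j =>
      lt_of_lt_of_le hσ0 (hσ.monotone (Fin.zero_le _))
    have hSs : S ≤ s := by
      have : σ 0 * k ≤ s := by
        rw [hs]
        have : σ 0 * (k : ℝ) = ∑ j, σ 0 * (f j : ℝ) := by
          rw [← Finset.mul_sum, ← hfk]; push_cast; ring
        rw [this]
        exact Finset.sum_le_sum fun j _ => by
          exact mul_le_mul_of_nonneg_right (hσ.monotone (Fin.zero_le _)) (Nat.cast_nonneg _)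
      linarith
    have hδs : δ ^ s = ∏ j, (δ ^ σ j.castSucc) ^ f j := by
      rw [hs, Real.rpow_sum_of_pos hδ]
      refine Finset.prod_congr rfl fun j _ => ?_
      rw [← Real.rpow_natCast (δ ^ σ j.castSucc) (f j), ← Real.rpow_mul hδ.le]
    have hts : t ^ s ≤ δ ^ s * (t / δ) ^ S := by
      rcases eq_or_lt_of_le ht0 with h0 | htpos
      · have hspos : 0 < s := lt_of_lt_of_le hSpos hSs
        rw [← h0, Real.zero_rpow hspos.ne', zero_div, Real.zero_rpow hSpos.ne', mul_zero]
      · have hdiv : t / δ ≤ 1 := by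
          rw [div_le_one hδ]; exact htδ.le
        have : t ^ s = δ ^ s * (t / δ) ^ s := by
          rw [Real.div_rpow ht0 hδ.le, mul_div_cancel₀]
          exact (Real.rpow_pos_of_pos hδ s).ne'
        rw [this]
        exact mul_le_mul_of_nonneg_left
          (Real.rpow_le_rpow_of_exponent_ge (div_pos htpos hδ) hdiv hSs)
          (Real.rpow_pos_of_pos hδ s).le
    calc (Nat.multinomial Finset.univ f : ℝ) * (∏ j, ‖α j‖ ^ f j) * t ^ s
        ≤ (Nat.multinomial Finset.univ f : ℝ) * (∏ j, ‖α j‖ ^ f j) *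
            (δ ^ s * (t / δ) ^ S) := by
          refine mul_le_mul_of_nonneg_left hts (by positivity)
      _ = (Nat.multinomial Finset.univ f : ℝ) *
            (∏ j, (‖α j‖ * δ ^ σ j.castSucc) ^ f j) * ((t / δ) ^ S) := by
          rw [hδs]
          simp_rw [mul_pow]
          rw [Finset.prod_mul_distrib]
          ring
  calc ∑ f ∈ Finset.Nat.antidiagonalTuple N k,
        (Nat.multinomial Finset.univ f : ℝ) * (∏ j, ‖α j‖ ^ f j) *
          t ^ (∑ j, σ j.castSucc * (f j : ℝ))
      ≤ ∑ f ∈ Finset.Nat.antidiagonalTuple N k,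
        (Nat.multinomial Finset.univ f : ℝ) *
          (∏ j, (‖α j‖ * δ ^ σ j.castSucc) ^ f j) * ((t / δ) ^ S) :=
        Finset.sum_le_sum key
    _ = (∑ j, ‖α j‖ * δ ^ σ j.castSucc) ^ k * ((t / δ) ^ S) := by
        rw [← Finset.sum_mul, Finset.sum_pow_eq_sum_piAntidiag,
          Finset.piAntidiag_univ_fin_eq_antidiagonalTuple]
    _ ≤ (1 / 2 : ℝ) ^ k * ((t / δ) ^ S) := by
        exact mul_le_mul_of_nonneg_right
          (pow_le_pow_left₀ (Finset.sum_nonneg fun j _ => by positivity) hsmall k)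
          (by positivity)
    _ = (2 : ℝ) ^ (-(k : ℝ)) * δ ^ (-S) * t ^ S := by
        rw [Real.div_rpow ht0 hδ.le, Real.rpow_neg hδ.le, Real.rpow_neg (by norm_num : (0:ℝ) ≤ 2),
          Real.rpow_natCast]
        field_simp
        rw [mul_right_comm, ← mul_pow]; norm_num
end

section
/- Under the hypotheses: (a_n) ⊂ ℂ, (c_n) positive reals with c_n < δ for n ≥ ν, ∑_n |a_n| c_n^{t} < ∞ for all t > S_0, σ > 0, 0 < σ_1 < ⋯ < σ_{N+1}, α_j ∈ ℂ with ∑_j |α_j| δ^{σ_j} ≤ 1/2, and k* = ⌈σ_{N+1}/σ_1⌉; define D_ν(s) = ∑_{n=ν}^∞ a_n c_n^s for Re(s) > S_0. Then the series ∑_{k=k*+1}^∞ ((s)_k/k!) ∑_{k_1+⋯+k_N=k} (k choose k_1,…,k_N)(∏_j α_j^{k_j}) D_ν(σ s + ∑_j σ_j k_j) converges absolutely for all s with Re(s) > (S_0 - σ_{N+1})/σ, and defines a holomorphic function on that half-plane. -/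
open Finset Filter

/-- Multinomial expansion over `antidiagonalTuple`. -/
lemma aux_multinomial_sum {N : ℕ} (m : ℕ) (x : Fin N → ℝ) :
    ∑ f ∈ Finset.Nat.antidiagonalTuple N m,
      (Nat.multinomial Finset.univ f : ℝ) * ∏ j, x j ^ f j = (∑ j, x j) ^ m := by
  have h := Finset.sum_pow_eq_sum_piAntidiag (Finset.univ : Finset (Fin N)) x m
  rw [Finset.piAntidiag_univ_fin_eq_antidiagonalTuple] at h
  exact h.symm

/-- Ratio-test summability for the Pochhammer majorant. -/
lemma aux_ratio_summable {R C : ℝ} (hR : 0 ≤ R) (hC : 0 ≤ C) (K : ℕ) :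
    Summable (fun k : ℕ => (∏ j ∈ Finset.range (k + K + 1), (R + (j : ℝ))) /
      ((k + K + 1).factorial : ℝ) * (C * (1 / 2 : ℝ) ^ (k + K + 1))) := by
  apply summable_of_ratio_norm_eventually_le (r := (3 / 4 : ℝ)) (by norm_num)
  filter_upwards [Filter.eventually_ge_atTop ⌈2 * R⌉₊] with k hk
  set m := k + K + 1 with hmdef
  have hmR : 2 * R ≤ (m : ℝ) := by
    have h1 : (2 * R) ≤ (⌈2 * R⌉₊ : ℝ) := Nat.le_ceil _
    have h2 : (⌈2 * R⌉₊ : ℝ) ≤ (k : ℝ) := by exact_mod_cast hk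
    have h3 : (k : ℝ) ≤ m := by exact_mod_cast Nat.le_add_right k (K + 1)
    linarith
  have hprod : 0 ≤ ∏ j ∈ Finset.range m, (R + (j : ℝ)) :=
    Finset.prod_nonneg fun j _ => by positivity
  have hfac : (0 : ℝ) < (m.factorial : ℝ) := by exact_mod_cast m.factorial_pos
  have hterm : 0 ≤ (∏ j ∈ Finset.range m, (R + (j : ℝ))) / (m.factorial : ℝ) *
      (C * (1 / 2 : ℝ) ^ m) := by positivity
  have hfr0 : 0 ≤ (R + (m : ℝ)) / (2 * ((m : ℝ) + 1)) := by positivity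
  have hkey : (∏ j ∈ Finset.range (k + 1 + K + 1), (R + (j : ℝ))) /
      (((k + 1 + K + 1).factorial : ℝ)) * (C * (1 / 2 : ℝ) ^ (k + 1 + K + 1)) =
      ((∏ j ∈ Finset.range m, (R + (j : ℝ))) / ((m.factorial : ℝ)) *
        (C * (1 / 2 : ℝ) ^ m)) * ((R + m) / (2 * (m + 1))) := by
    have h1 : k + 1 + K + 1 = m + 1 := by omega
    rw [h1, Finset.prod_range_succ, Nat.factorial_succ]
    push_cast
    field_simp
    ring
  rw [Real.norm_eq_abs, Real.norm_eq_abs, hkey, abs_of_nonneg (mul_nonneg hterm hfr0),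
    abs_of_nonneg hterm]
  have hfrac : (R + m) / (2 * (m + 1)) ≤ 3 / 4 := by
    rw [div_le_div_iff₀ (by positivity) (by norm_num)]
    nlinarith [hmR]
  nlinarith [hterm, hfrac, hfr0]

/-- Bound on the absolute value of the falling-factorial product. -/
lemma aux_poch_bound (s : ℂ) {R : ℝ} (hsR : ‖s‖ ≤ R) (m : ℕ) :
    ‖∏ j ∈ Finset.range m, (s - (j : ℕ))‖ ≤
      ∏ j ∈ Finset.range m, (R + (j : ℝ)) := by
  rw [norm_prod]
  apply Finset.prod_le_prod (fun j _ => norm_nonneg _)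
  intro j _
  calc ‖s - (j : ℕ)‖ ≤ ‖s‖ + ‖((j : ℕ) : ℂ)‖ :=
        norm_sub_le _ _
    _ ≤ R + (j : ℝ) := by rw [Complex.norm_natCast]; exact add_le_add_left hsR _

/-- Lower bound on the exponent `∑ σ_j f_j` for tuples of total degree `m > k*`. -/
lemma aux_exponent_ge {N : ℕ} (σs : Fin (N + 1) → ℝ) (hσs : StrictMono σs)
    (hσs0 : 0 < σs 0) {m : ℕ} (hm : ⌈σs (Fin.last N) / σs 0⌉₊ ≤ m)
    {f : Fin N → ℕ} (hf : f ∈ Finset.Nat.antidiagonalTuple N m) :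
    σs (Fin.last N) ≤ ∑ j, σs j.castSucc * (f j : ℝ) := by
  have hsumf : ∑ j, f j = m := Finset.Nat.mem_antidiagonalTuple.mp hf
  have h1 : σs 0 * (m : ℝ) ≤ ∑ j, σs j.castSucc * (f j : ℝ) := by
    calc σs 0 * (m : ℝ) = ∑ j, σs 0 * (f j : ℝ) := by
          rw [← Finset.mul_sum]
          congr 1
          exact_mod_cast (congrArg (fun n : ℕ => (n : ℝ)) hsumf).symm
      _ ≤ ∑ j, σs j.castSucc * (f j : ℝ) :=
          Finset.sum_le_sum fun j _ =>
            mul_le_mul_of_nonneg_right (hσs.monotone (Fin.zero_le _)) (Nat.cast_nonneg _)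
  have h2 : σs (Fin.last N) ≤ σs 0 * (m : ℝ) := by
    have hceil : σs (Fin.last N) / σs 0 ≤ (⌈σs (Fin.last N) / σs 0⌉₊ : ℝ) := Nat.le_ceil _
    have hm' : ((⌈σs (Fin.last N) / σs 0⌉₊ : ℕ) : ℝ) ≤ (m : ℝ) := by exact_mod_cast hm
    have := (div_le_iff₀ hσs0).mp (hceil.trans hm')
    linarith
  linarith


lemma aux_Dnu_bound (a : ℕ → ℂ) (c : ℕ → ℝ) (hc : ∀ n, 0 < c n) (S₀ : ℝ)
    (δ : ℝ) (hδ : 0 < δ) (ν : ℕ) (hcδ : ∀ n, ν ≤ n → c n < δ)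
    (hsum : ∀ t : ℝ, S₀ < t → Summable (fun n : ℕ => ‖a n‖ * c n ^ t))
    (Dν : ℂ → ℂ)
    (hDν : ∀ w : ℂ, S₀ < w.re → Dν w = ∑' n : ℕ, a (n + ν) * ((c (n + ν) : ℂ)) ^ w)
    {t₀ : ℝ} (ht₀ : S₀ < t₀) (w : ℂ) (hw : t₀ ≤ w.re) :
    ‖Dν w‖ ≤ (∑' n : ℕ, ‖a (n + ν)‖ * c (n + ν) ^ t₀) *
      δ ^ (w.re - t₀) := by
  have hsum0 : Summable (fun n : ℕ => ‖a (n + ν)‖ * c (n + ν) ^ t₀) :=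
    (summable_nat_add_iff ν).2 (hsum t₀ ht₀)
  have hle : ∀ n : ℕ, ‖a (n + ν)‖ * c (n + ν) ^ w.re ≤
      ‖a (n + ν)‖ * c (n + ν) ^ t₀ * δ ^ (w.re - t₀) := by
    intro n
    have hsplit : c (n + ν) ^ w.re = c (n + ν) ^ t₀ * c (n + ν) ^ (w.re - t₀) := by
      rw [← Real.rpow_add (hc _)]; ring_nf
    have h2 : c (n + ν) ^ (w.re - t₀) ≤ δ ^ (w.re - t₀) :=
      Real.rpow_le_rpow (hc _).le (hcδ _ (Nat.le_add_left _ _)).le (by linarith)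
    rw [hsplit, mul_assoc]
    exact mul_le_mul_of_nonneg_left
      (mul_le_mul_of_nonneg_left h2 (Real.rpow_nonneg (hc _).le _))
      (norm_nonneg _)
  have hsumw : Summable (fun n : ℕ => ‖a (n + ν)‖ * c (n + ν) ^ w.re) :=
    Summable.of_nonneg_of_le
      (fun n => mul_nonneg (norm_nonneg _) (Real.rpow_nonneg (hc _).le _))
      hle (hsum0.mul_right _)
  have habs : ∀ n : ℕ, ‖a (n + ν) * ((c (n + ν) : ℂ)) ^ w‖ =
      ‖a (n + ν)‖ * c (n + ν) ^ w.re := by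
    intro n
    rw [norm_mul, Complex.norm_cpow_eq_rpow_re_of_pos (hc _)]
  rw [hDν w (lt_of_lt_of_le ht₀ hw)]
  calc ‖∑' n : ℕ, a (n + ν) * ((c (n + ν) : ℂ)) ^ w‖
      ≤ ∑' n : ℕ, ‖a (n + ν) * ((c (n + ν) : ℂ)) ^ w‖ :=
        norm_tsum_le_tsum_norm ((summable_congr habs).2 hsumw)
    _ = ∑' n : ℕ, ‖a (n + ν)‖ * c (n + ν) ^ w.re := tsum_congr habs
    _ ≤ ∑' n : ℕ, ‖a (n + ν)‖ * c (n + ν) ^ t₀ * δ ^ (w.re - t₀) :=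
        Summable.tsum_le_tsum hle hsumw (hsum0.mul_right _)
    _ = (∑' n : ℕ, ‖a (n + ν)‖ * c (n + ν) ^ t₀) * δ ^ (w.re - t₀) :=
        tsum_mul_right

lemma aux_Dnu_holo (a : ℕ → ℂ) (c : ℕ → ℝ) (hc : ∀ n, 0 < c n) (S₀ : ℝ)
    (δ : ℝ) (hδ : 0 < δ) (ν : ℕ) (hcδ : ∀ n, ν ≤ n → c n < δ)
    (hsum : ∀ t : ℝ, S₀ < t → Summable (fun n : ℕ => ‖a n‖ * c n ^ t))
    (Dν : ℂ → ℂ)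
    (hDν : ∀ w : ℂ, S₀ < w.re → Dν w = ∑' n : ℕ, a (n + ν) * ((c (n + ν) : ℂ)) ^ w) :
    DifferentiableOn ℂ Dν {w : ℂ | S₀ < w.re} := by
  intro w₀ hw₀
  simp only [Set.mem_setOf_eq] at hw₀
  set r : ℝ := (w₀.re - S₀) / 2 with hrdef
  have hr : 0 < r := by rw [hrdef]; linarith
  have hreball : ∀ w ∈ Metric.ball w₀ r, |w.re - w₀.re| < r := by
    intro w hw
    rw [Metric.mem_ball, Complex.dist_eq] at hw
    have h1 : |(w - w₀).re| ≤ ‖w - w₀‖ := Complex.abs_re_le_norm _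
    rw [Complex.sub_re] at h1
    linarith
  have hball : Metric.ball w₀ r ⊆ {w : ℂ | S₀ < w.re} := by
    intro w hw
    have := abs_lt.mp (hreball w hw)
    simp only [Set.mem_setOf_eq]
    have : w₀.re - r < w.re := by linarith [this.1]
    have hwr : w₀.re = S₀ + 2 * r := by rw [hrdef]; ring
    linarith
  set t₀ : ℝ := S₀ + r with ht₀def
  have ht₀ : S₀ < t₀ := by rw [ht₀def]; linarith
  have hre : ∀ w ∈ Metric.ball w₀ r, t₀ ≤ w.re ∧ w.re ≤ t₀ + 2 * r := by
    intro w hw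
    have h := abs_lt.mp (hreball w hw)
    have hwr : w₀.re = S₀ + 2 * r := by rw [hrdef]; ring
    constructor <;> [skip; skip] <;> rw [ht₀def] <;> linarith [h.1, h.2]
  have hdiff := Complex.differentiableOn_tsum_of_summable_norm
    (u := fun n : ℕ => ‖a (n + ν)‖ * c (n + ν) ^ t₀ * (max 1 δ) ^ (2 * r))
    (((summable_nat_add_iff ν).2 (hsum t₀ ht₀)).mul_right _)
    (fun n => ((differentiable_const (a (n + ν))).mul
      (differentiable_id.const_cpow
        (Or.inl (Complex.ofReal_ne_zero.mpr (hc (n + ν)).ne')))).differentiableOn)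
    Metric.isOpen_ball
    (fun n w hw => by
      rcases hre w hw with ⟨h1, h2⟩
      simp only [Pi.mul_apply]
      rw [norm_mul, Complex.norm_cpow_eq_rpow_re_of_pos (hc _)]
      have hcw : c (n + ν) ^ w.re ≤ c (n + ν) ^ t₀ * (max 1 δ) ^ (2 * r) := by
        rw [show w.re = t₀ + (w.re - t₀) by ring, Real.rpow_add (hc _)]
        refine mul_le_mul_of_nonneg_left ?_ (Real.rpow_nonneg (hc _).le _)
        calc c (n + ν) ^ (w.re - t₀) ≤ (max 1 δ) ^ (w.re - t₀) :=
              Real.rpow_le_rpow (hc _).le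
                ((hcδ _ (Nat.le_add_left _ _)).le.trans (le_max_right _ _)) (by linarith)
          _ ≤ (max 1 δ) ^ (2 * r) :=
              Real.rpow_le_rpow_of_exponent_le (le_max_left _ _) (by linarith)
      simp only [id_eq]
      calc ‖a (n + ν)‖ * c (n + ν) ^ w.re
          ≤ ‖a (n + ν)‖ * (c (n + ν) ^ t₀ * (1 ⊔ δ) ^ (2 * r)) :=
            mul_le_mul_of_nonneg_left hcw (norm_nonneg _)
        _ = ‖a (n + ν)‖ * c (n + ν) ^ t₀ * (1 ⊔ δ) ^ (2 * r) := by ring)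
  have hDball : DifferentiableOn ℂ Dν (Metric.ball w₀ r) :=
    hdiff.congr (fun w hw => hDν w (hball hw))
  exact (hDball.differentiableAt
    (Metric.isOpen_ball.mem_nhds (Metric.mem_ball_self hr))).differentiableWithinAt

lemma aux_inner_bound (a : ℕ → ℂ) (c : ℕ → ℝ) (hc : ∀ n, 0 < c n) (S₀ : ℝ)
    (N : ℕ) (α : Fin N → ℂ) (σs : Fin (N + 1) → ℝ)
    (hσs : StrictMono σs) (hσs0 : 0 < σs 0) (σ : ℝ) (hσ : 0 < σ)
    (δ : ℝ) (hδ : 0 < δ) (ν : ℕ) (hcδ : ∀ n, ν ≤ n → c n < δ)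
    (hsum : ∀ t : ℝ, S₀ < t → Summable (fun n : ℕ => ‖a n‖ * c n ^ t))
    (hsmall : ∑ j, ‖α j‖ * δ ^ σs j.castSucc ≤ 1 / 2)
    (Dν : ℂ → ℂ)
    (hDν : ∀ w : ℂ, S₀ < w.re → Dν w = ∑' n : ℕ, a (n + ν) * ((c (n + ν) : ℂ)) ^ w)
    (t₀ E : ℝ) (ht₀ : S₀ < t₀) (hE0 : 0 ≤ E) (s : ℂ)
    (hs1 : t₀ ≤ σ * s.re + σs (Fin.last N))
    (hs2 : σ * s.re + σs (Fin.last N) - t₀ ≤ E)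
    (m : ℕ) (hm : ⌈σs (Fin.last N) / σs 0⌉₊ ≤ m) :
    ∑ f ∈ Finset.Nat.antidiagonalTuple N m,
      (Nat.multinomial Finset.univ f : ℝ) * (∏ j, ‖α j‖ ^ f j) *
        ‖Dν ((σ : ℂ) * s + ((∑ j, σs j.castSucc * (f j : ℝ) : ℝ) : ℂ))‖
      ≤ ((∑' n : ℕ, ‖a (n + ν)‖ * c (n + ν) ^ t₀) * (1 ⊔ δ) ^ E
          * δ ^ (-(σs (Fin.last N)))) * (1 / 2 : ℝ) ^ m := by
  set C₀ : ℝ := ∑' n : ℕ, ‖a (n + ν)‖ * c (n + ν) ^ t₀ with hC₀def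
  have hC₀ : 0 ≤ C₀ :=
    tsum_nonneg fun n => mul_nonneg (norm_nonneg _) (Real.rpow_nonneg (hc _).le _)
  have hper : ∀ f ∈ Finset.Nat.antidiagonalTuple N m,
      (Nat.multinomial Finset.univ f : ℝ) * (∏ j, ‖α j‖ ^ f j) *
        ‖Dν ((σ : ℂ) * s + ((∑ j, σs j.castSucc * (f j : ℝ) : ℝ) : ℂ))‖
      ≤ (C₀ * (1 ⊔ δ) ^ E * δ ^ (-(σs (Fin.last N)))) *
        ((Nat.multinomial Finset.univ f : ℝ) *
          ∏ j, (‖α j‖ * δ ^ σs j.castSucc) ^ f j) := by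
    intro f hf
    set w : ℂ := (σ : ℂ) * s + ((∑ j, σs j.castSucc * (f j : ℝ) : ℝ) : ℂ) with hwdef
    set S : ℝ := ∑ j, σs j.castSucc * (f j : ℝ) with hSdef
    have hwre : w.re = σ * s.re + S := by
      simp [hwdef, Complex.add_re, Complex.mul_re, Complex.ofReal_re, Complex.ofReal_im]
    have hSge : σs (Fin.last N) ≤ S := aux_exponent_ge σs hσs hσs0 hm hf
    have hwt₀ : t₀ ≤ w.re := by rw [hwre]; linarith
    have hDb := aux_Dnu_bound a c hc S₀ δ hδ ν hcδ hsum Dν hDν ht₀ w hwt₀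
    have hsplit : δ ^ (w.re - t₀) ≤ (1 ⊔ δ) ^ E * (δ ^ (-(σs (Fin.last N))) * δ ^ S) := by
      have h1 : δ ^ (w.re - t₀) =
          δ ^ (σ * s.re + σs (Fin.last N) - t₀) * (δ ^ (-(σs (Fin.last N))) * δ ^ S) := by
        rw [← Real.rpow_add hδ, ← Real.rpow_add hδ, hwre]; ring_nf
      rw [h1]
      refine mul_le_mul_of_nonneg_right ?_
        (mul_nonneg (Real.rpow_nonneg hδ.le _) (Real.rpow_nonneg hδ.le _))
      calc δ ^ (σ * s.re + σs (Fin.last N) - t₀)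
          ≤ (1 ⊔ δ) ^ (σ * s.re + σs (Fin.last N) - t₀) :=
            Real.rpow_le_rpow hδ.le (le_max_right _ _) (by linarith)
        _ ≤ (1 ⊔ δ) ^ E := Real.rpow_le_rpow_of_exponent_le (le_max_left _ _) hs2
    have hδS : δ ^ S = ∏ j, (δ ^ σs j.castSucc) ^ f j := by
      rw [hSdef, Real.rpow_sum_of_pos hδ]
      refine Finset.prod_congr rfl fun j _ => ?_
      rw [Real.rpow_mul hδ.le, Real.rpow_natCast]
    have hDw : ‖Dν w‖ ≤
        C₀ * (1 ⊔ δ) ^ E * δ ^ (-(σs (Fin.last N))) * ∏ j, (δ ^ σs j.castSucc) ^ f j := by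
      calc ‖Dν w‖ ≤ C₀ * δ ^ (w.re - t₀) := hDb
        _ ≤ C₀ * ((1 ⊔ δ) ^ E * (δ ^ (-(σs (Fin.last N))) * δ ^ S)) :=
            mul_le_mul_of_nonneg_left hsplit hC₀
        _ = C₀ * (1 ⊔ δ) ^ E * δ ^ (-(σs (Fin.last N))) * ∏ j, (δ ^ σs j.castSucc) ^ f j := by
            rw [hδS]; ring
    calc (Nat.multinomial Finset.univ f : ℝ) * (∏ j, ‖α j‖ ^ f j) *
          ‖Dν w‖
        ≤ (Nat.multinomial Finset.univ f : ℝ) * (∏ j, ‖α j‖ ^ f j) *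
          (C₀ * (1 ⊔ δ) ^ E * δ ^ (-(σs (Fin.last N))) * ∏ j, (δ ^ σs j.castSucc) ^ f j) :=
          mul_le_mul_of_nonneg_left hDw
            (mul_nonneg (Nat.cast_nonneg _)
              (Finset.prod_nonneg fun j _ => pow_nonneg (norm_nonneg _) _))
      _ = (C₀ * (1 ⊔ δ) ^ E * δ ^ (-(σs (Fin.last N)))) *
          ((Nat.multinomial Finset.univ f : ℝ) *
            ((∏ j, ‖α j‖ ^ f j) * ∏ j, (δ ^ σs j.castSucc) ^ f j)) := by ring
      _ = (C₀ * (1 ⊔ δ) ^ E * δ ^ (-(σs (Fin.last N)))) *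
          ((Nat.multinomial Finset.univ f : ℝ) *
            ∏ j, (‖α j‖ * δ ^ σs j.castSucc) ^ f j) := by
          rw [← Finset.prod_mul_distrib]
          simp_rw [mul_pow]
  calc ∑ f ∈ Finset.Nat.antidiagonalTuple N m,
        (Nat.multinomial Finset.univ f : ℝ) * (∏ j, ‖α j‖ ^ f j) *
          ‖Dν ((σ : ℂ) * s + ((∑ j, σs j.castSucc * (f j : ℝ) : ℝ) : ℂ))‖
      ≤ ∑ f ∈ Finset.Nat.antidiagonalTuple N m,
        (C₀ * (1 ⊔ δ) ^ E * δ ^ (-(σs (Fin.last N)))) *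
          ((Nat.multinomial Finset.univ f : ℝ) *
            ∏ j, (‖α j‖ * δ ^ σs j.castSucc) ^ f j) := Finset.sum_le_sum hper
    _ = (C₀ * (1 ⊔ δ) ^ E * δ ^ (-(σs (Fin.last N)))) *
        (∑ j, ‖α j‖ * δ ^ σs j.castSucc) ^ m := by
        rw [← Finset.mul_sum, aux_multinomial_sum]
    _ ≤ (C₀ * (1 ⊔ δ) ^ E * δ ^ (-(σs (Fin.last N)))) * (1 / 2 : ℝ) ^ m := by
        refine mul_le_mul_of_nonneg_left ?_
          (mul_nonneg (mul_nonneg hC₀ (Real.rpow_nonneg (le_trans zero_le_one (le_max_left _ _)) _))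
            (Real.rpow_nonneg hδ.le _))
        exact pow_le_pow_left₀
          (Finset.sum_nonneg fun j _ =>
            mul_nonneg (norm_nonneg _) (Real.rpow_nonneg hδ.le _)) hsmall m

/-- The tail k > k* of the main term series
∑_k ((s)_k/k!) ∑_{k⃗} A(k⃗,{α_j}) D_ν(σs + σ⃗·k⃗) converges absolutely and is
holomorphic on the half-plane Re(s) > (S₀ - σ_{N+1})/σ. -/
theorem main_term_tail_holomorphic (a : ℕ → ℂ) (c : ℕ → ℝ) (hc : ∀ n, 0 < c n)
    (S₀ : ℝ) (N : ℕ) (α : Fin N → ℂ) (σs : Fin (N + 1) → ℝ)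
    (hσs : StrictMono σs) (hσs0 : 0 < σs 0) (σ : ℝ) (hσ : 0 < σ)
    (δ : ℝ) (hδ : 0 < δ) (ν : ℕ) (hcδ : ∀ n, ν ≤ n → c n < δ)
    (hsum : ∀ t : ℝ, S₀ < t → Summable (fun n : ℕ => ‖a n‖ * c n ^ t))
    (hsmall : ∑ j, ‖α j‖ * δ ^ σs j.castSucc ≤ 1 / 2)
    (Dν : ℂ → ℂ)
    (hDν : ∀ w : ℂ, S₀ < w.re → Dν w = ∑' n : ℕ, a (n + ν) * ((c (n + ν) : ℂ)) ^ w) :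
    (∀ s : ℂ, (S₀ - σs (Fin.last N)) / σ < s.re →
      Summable (fun k : ℕ =>
        ‖(∏ j ∈ Finset.range (k + ⌈σs (Fin.last N) / σs 0⌉₊ + 1), (s - j)) /
            ((k + ⌈σs (Fin.last N) / σs 0⌉₊ + 1).factorial : ℂ)‖ *
          ∑ f ∈ Finset.Nat.antidiagonalTuple N (k + ⌈σs (Fin.last N) / σs 0⌉₊ + 1),
            (Nat.multinomial Finset.univ f : ℝ) * (∏ j, ‖α j‖ ^ f j) *
              ‖Dν ((σ : ℂ) * s + ((∑ j, σs j.castSucc * (f j : ℝ) : ℝ) : ℂ))‖)) ∧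
    DifferentiableOn ℂ
      (fun s : ℂ => ∑' k : ℕ,
        ((∏ j ∈ Finset.range (k + ⌈σs (Fin.last N) / σs 0⌉₊ + 1), (s - j)) /
            ((k + ⌈σs (Fin.last N) / σs 0⌉₊ + 1).factorial : ℂ)) *
          ∑ f ∈ Finset.Nat.antidiagonalTuple N (k + ⌈σs (Fin.last N) / σs 0⌉₊ + 1),
            (Nat.multinomial Finset.univ f : ℂ) * (∏ j, α j ^ f j) *
              Dν ((σ : ℂ) * s + ((∑ j, σs j.castSucc * (f j : ℝ) : ℝ) : ℂ)))
      {s : ℂ | (S₀ - σs (Fin.last N)) / σ < s.re} := by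
  have hσN : 0 < σs (Fin.last N) := lt_of_lt_of_le hσs0 (hσs.monotone (Fin.zero_le _))
  constructor
  · intro s hs
    have hsre : S₀ - σs (Fin.last N) < σ * s.re := by
      have := (div_lt_iff₀ hσ).mp hs
      linarith
    have ht₀ : S₀ < σ * s.re + σs (Fin.last N) := by linarith
    set C : ℝ := (∑' n : ℕ, ‖a (n + ν)‖ *
        c (n + ν) ^ (σ * s.re + σs (Fin.last N))) * (1 ⊔ δ) ^ (0 : ℝ) *
        δ ^ (-(σs (Fin.last N))) with hCdef
    have hC : 0 ≤ C := by
      refine mul_nonneg (mul_nonneg (tsum_nonneg fun n => mul_nonneg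
        (norm_nonneg _) (Real.rpow_nonneg (hc _).le _)) ?_) ?_
      · exact Real.rpow_nonneg (le_trans zero_le_one (le_max_left _ _)) _
      · exact Real.rpow_nonneg hδ.le _
    refine Summable.of_nonneg_of_le ?_ ?_
      (aux_ratio_summable (norm_nonneg s) hC
        ⌈σs (Fin.last N) / σs 0⌉₊)
    · intro k
      refine mul_nonneg (norm_nonneg _) (Finset.sum_nonneg fun f _ => ?_)
      exact mul_nonneg (mul_nonneg (Nat.cast_nonneg _)
        (Finset.prod_nonneg fun j _ => pow_nonneg (norm_nonneg _) _))
        (norm_nonneg _)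
    · intro k
      have hfac : (0 : ℝ) < ((k + ⌈σs (Fin.last N) / σs 0⌉₊ + 1).factorial : ℝ) := by
        exact_mod_cast Nat.factorial_pos _
      have h1 : ‖(∏ j ∈ Finset.range (k + ⌈σs (Fin.last N) / σs 0⌉₊ + 1),
          (s - j)) / ((k + ⌈σs (Fin.last N) / σs 0⌉₊ + 1).factorial : ℂ)‖ ≤
          (∏ j ∈ Finset.range (k + ⌈σs (Fin.last N) / σs 0⌉₊ + 1),
            (‖s‖ + (j : ℝ))) /
          ((k + ⌈σs (Fin.last N) / σs 0⌉₊ + 1).factorial : ℝ) := by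
        rw [norm_div, Complex.norm_natCast]
        exact (div_le_div_iff_of_pos_right hfac).mpr (aux_poch_bound s le_rfl _)
      have h2 := aux_inner_bound a c hc S₀ N α σs hσs hσs0 σ hσ δ hδ ν hcδ hsum hsmall
        Dν hDν (σ * s.re + σs (Fin.last N)) 0 ht₀ le_rfl s le_rfl (by linarith)
        (k + ⌈σs (Fin.last N) / σs 0⌉₊ + 1) (by omega)
      exact mul_le_mul h1 (h2.trans (le_of_eq (by rw [hCdef])))
        (Finset.sum_nonneg fun f _ => mul_nonneg (mul_nonneg (Nat.cast_nonneg _)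
          (Finset.prod_nonneg fun j _ => pow_nonneg (norm_nonneg _) _))
          (norm_nonneg _))
        (div_nonneg (Finset.prod_nonneg fun j _ => add_nonneg
          (norm_nonneg _) (Nat.cast_nonneg _)) hfac.le)
  · have hDholo := aux_Dnu_holo a c hc S₀ δ hδ ν hcδ hsum Dν hDν
    intro s₀ hs₀
    simp only [Set.mem_setOf_eq] at hs₀
    set r : ℝ := (s₀.re - (S₀ - σs (Fin.last N)) / σ) / 2 with hrdef
    have hr : 0 < r := by rw [hrdef]; linarith
    have hσL : σ * ((S₀ - σs (Fin.last N)) / σ) = S₀ - σs (Fin.last N) := by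
      field_simp
    have ht₀ : S₀ < σ * (s₀.re - r) + σs (Fin.last N) := by
      have hL : (S₀ - σs (Fin.last N)) / σ < s₀.re - r := by rw [hrdef]; linarith
      have h' := mul_lt_mul_of_pos_left hL hσ
      rw [hσL] at h'
      linarith
    have hreball : ∀ s ∈ Metric.ball s₀ r, |s.re - s₀.re| < r := by
      intro s hsb
      rw [Metric.mem_ball, Complex.dist_eq] at hsb
      have h1 : |(s - s₀).re| ≤ ‖s - s₀‖ := Complex.abs_re_le_norm _
      rw [Complex.sub_re] at h1
      linarith
    have hRball : ∀ s ∈ Metric.ball s₀ r, ‖s‖ ≤ ‖s₀‖ + r := by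
      intro s hsb
      rw [Metric.mem_ball, Complex.dist_eq] at hsb
      calc ‖s‖ = ‖s₀ + (s - s₀)‖ := by ring_nf
        _ ≤ ‖s₀‖ + ‖s - s₀‖ := norm_add_le _ _
        _ ≤ ‖s₀‖ + r := by linarith
    have hball : ∀ s ∈ Metric.ball s₀ r,
        σ * (s₀.re - r) + σs (Fin.last N) ≤ σ * s.re + σs (Fin.last N) ∧
        σ * s.re + σs (Fin.last N) - (σ * (s₀.re - r) + σs (Fin.last N)) ≤
          σ * (2 * r) := by
      intro s hsb
      have h := abs_lt.mp (hreball s hsb)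
      constructor
      · have e1 : s₀.re - r ≤ s.re := by linarith [h.1]
        nlinarith [mul_le_mul_of_nonneg_left e1 hσ.le]
      · nlinarith [mul_lt_mul_of_pos_left h.2 hσ]
    have hS₀lt : ∀ s ∈ Metric.ball s₀ r, ∀ m : ℕ, ⌈σs (Fin.last N) / σs 0⌉₊ ≤ m →
        ∀ f ∈ Finset.Nat.antidiagonalTuple N m,
        S₀ < ((σ : ℂ) * s + ((∑ j, σs j.castSucc * (f j : ℝ) : ℝ) : ℂ)).re := by
      intro s hsb m hm f hf
      have hwre : ((σ : ℂ) * s + ((∑ j, σs j.castSucc * (f j : ℝ) : ℝ) : ℂ)).re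
          = σ * s.re + ∑ j, σs j.castSucc * (f j : ℝ) := by
        simp [Complex.add_re, Complex.mul_re, Complex.ofReal_re, Complex.ofReal_im]
      rw [hwre]
      have h1 := aux_exponent_ge σs hσs hσs0 hm hf
      have h2 := (hball s hsb).1
      linarith [ht₀]
    have hFdiff : ∀ k : ℕ, DifferentiableOn ℂ (fun s : ℂ =>
        ((∏ j ∈ Finset.range (k + ⌈σs (Fin.last N) / σs 0⌉₊ + 1), (s - j)) /
            ((k + ⌈σs (Fin.last N) / σs 0⌉₊ + 1).factorial : ℂ)) *
          ∑ f ∈ Finset.Nat.antidiagonalTuple N (k + ⌈σs (Fin.last N) / σs 0⌉₊ + 1),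
            (Nat.multinomial Finset.univ f : ℂ) * (∏ j, α j ^ f j) *
              Dν ((σ : ℂ) * s + ((∑ j, σs j.castSucc * (f j : ℝ) : ℝ) : ℂ)))
        (Metric.ball s₀ r) := by
      intro k
      apply DifferentiableOn.mul
      · exact ((Differentiable.fun_finset_prod
          (fun j _ => differentiable_id.sub_const _)).div_const _).differentiableOn
      · apply DifferentiableOn.fun_sum
        intro f hf
        apply DifferentiableOn.mul (differentiableOn_const _)
        have haff : Differentiable ℂ (fun s : ℂ => (σ : ℂ) * s +
            ((∑ j, σs j.castSucc * (f j : ℝ) : ℝ) : ℂ)) :=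
          (differentiable_id.const_mul _).add_const _
        refine DifferentiableOn.comp hDholo haff.differentiableOn ?_
        intro s hsb
        exact hS₀lt s hsb _ (by omega) f hf
    have hC2 : 0 ≤ (∑' n : ℕ, ‖a (n + ν)‖ *
        c (n + ν) ^ (σ * (s₀.re - r) + σs (Fin.last N))) * (1 ⊔ δ) ^ (σ * (2 * r)) *
        δ ^ (-(σs (Fin.last N))) := by
      refine mul_nonneg (mul_nonneg (tsum_nonneg fun n => mul_nonneg
        (norm_nonneg _) (Real.rpow_nonneg (hc _).le _)) ?_) ?_
      · exact Real.rpow_nonneg (le_trans zero_le_one (le_max_left _ _)) _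
      · exact Real.rpow_nonneg hδ.le _
    have husum := aux_ratio_summable
      (R := ‖s₀‖ + r)
      (add_nonneg (norm_nonneg _) hr.le) hC2 ⌈σs (Fin.last N) / σs 0⌉₊
    have hFle : ∀ k : ℕ, ∀ s ∈ Metric.ball s₀ r,
        ‖((∏ j ∈ Finset.range (k + ⌈σs (Fin.last N) / σs 0⌉₊ + 1), (s - j)) /
            ((k + ⌈σs (Fin.last N) / σs 0⌉₊ + 1).factorial : ℂ)) *
          ∑ f ∈ Finset.Nat.antidiagonalTuple N (k + ⌈σs (Fin.last N) / σs 0⌉₊ + 1),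
            (Nat.multinomial Finset.univ f : ℂ) * (∏ j, α j ^ f j) *
              Dν ((σ : ℂ) * s + ((∑ j, σs j.castSucc * (f j : ℝ) : ℝ) : ℂ))‖ ≤
        (∏ j ∈ Finset.range (k + ⌈σs (Fin.last N) / σs 0⌉₊ + 1),
          ((‖s₀‖ + r) + (j : ℝ))) /
          ((k + ⌈σs (Fin.last N) / σs 0⌉₊ + 1).factorial : ℝ) *
        (((∑' n : ℕ, ‖a (n + ν)‖ *
            c (n + ν) ^ (σ * (s₀.re - r) + σs (Fin.last N))) * (1 ⊔ δ) ^ (σ * (2 * r)) *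
            δ ^ (-(σs (Fin.last N)))) *
          (1 / 2 : ℝ) ^ (k + ⌈σs (Fin.last N) / σs 0⌉₊ + 1)) := by
      intro k s hsb
      have hfac : (0 : ℝ) < ((k + ⌈σs (Fin.last N) / σs 0⌉₊ + 1).factorial : ℝ) := by
        exact_mod_cast Nat.factorial_pos _
      rw [norm_mul]
      have h1 : ‖(∏ j ∈ Finset.range (k + ⌈σs (Fin.last N) / σs 0⌉₊ + 1),
          (s - j)) / ((k + ⌈σs (Fin.last N) / σs 0⌉₊ + 1).factorial : ℂ)‖ ≤
          (∏ j ∈ Finset.range (k + ⌈σs (Fin.last N) / σs 0⌉₊ + 1),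
            ((‖s₀‖ + r) + (j : ℝ))) /
          ((k + ⌈σs (Fin.last N) / σs 0⌉₊ + 1).factorial : ℝ) := by
        rw [norm_div, Complex.norm_natCast]
        exact (div_le_div_iff_of_pos_right hfac).mpr (aux_poch_bound s (hRball s hsb) _)
      have hnorm : ∀ f : Fin N → ℕ,
          ‖(Nat.multinomial Finset.univ f : ℂ) * (∏ j, α j ^ f j) *
            Dν ((σ : ℂ) * s + ((∑ j, σs j.castSucc * (f j : ℝ) : ℝ) : ℂ))‖ =
          (Nat.multinomial Finset.univ f : ℝ) * (∏ j, ‖α j‖ ^ f j) *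
            ‖Dν ((σ : ℂ) * s +
              ((∑ j, σs j.castSucc * (f j : ℝ) : ℝ) : ℂ))‖ := by
        intro f
        rw [norm_mul, norm_mul, Complex.norm_natCast, norm_prod]
        simp_rw [norm_pow]
      have h2 : ‖∑ f ∈ Finset.Nat.antidiagonalTuple N
            (k + ⌈σs (Fin.last N) / σs 0⌉₊ + 1),
            (Nat.multinomial Finset.univ f : ℂ) * (∏ j, α j ^ f j) *
              Dν ((σ : ℂ) * s + ((∑ j, σs j.castSucc * (f j : ℝ) : ℝ) : ℂ))‖ ≤
          ((∑' n : ℕ, ‖a (n + ν)‖ *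
            c (n + ν) ^ (σ * (s₀.re - r) + σs (Fin.last N))) * (1 ⊔ δ) ^ (σ * (2 * r)) *
            δ ^ (-(σs (Fin.last N)))) *
          (1 / 2 : ℝ) ^ (k + ⌈σs (Fin.last N) / σs 0⌉₊ + 1) := by
        calc ‖∑ f ∈ Finset.Nat.antidiagonalTuple N
              (k + ⌈σs (Fin.last N) / σs 0⌉₊ + 1),
              (Nat.multinomial Finset.univ f : ℂ) * (∏ j, α j ^ f j) *
                Dν ((σ : ℂ) * s + ((∑ j, σs j.castSucc * (f j : ℝ) : ℝ) : ℂ))‖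
            ≤ ∑ f ∈ Finset.Nat.antidiagonalTuple N
              (k + ⌈σs (Fin.last N) / σs 0⌉₊ + 1),
              ‖(Nat.multinomial Finset.univ f : ℂ) * (∏ j, α j ^ f j) *
                Dν ((σ : ℂ) * s + ((∑ j, σs j.castSucc * (f j : ℝ) : ℝ) : ℂ))‖ := by
              exact norm_sum_le _ _
          _ = ∑ f ∈ Finset.Nat.antidiagonalTuple N
              (k + ⌈σs (Fin.last N) / σs 0⌉₊ + 1),
              (Nat.multinomial Finset.univ f : ℝ) * (∏ j, ‖α j‖ ^ f j) *
                ‖Dν ((σ : ℂ) * s +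
                  ((∑ j, σs j.castSucc * (f j : ℝ) : ℝ) : ℂ))‖ :=
              Finset.sum_congr rfl fun f _ => hnorm f
          _ ≤ _ := aux_inner_bound a c hc S₀ N α σs hσs hσs0 σ hσ δ hδ ν hcδ hsum hsmall
              Dν hDν (σ * (s₀.re - r) + σs (Fin.last N)) (σ * (2 * r)) ht₀
              (by positivity) s (hball s hsb).1 (hball s hsb).2
              (k + ⌈σs (Fin.last N) / σs 0⌉₊ + 1) (by omega)
      exact mul_le_mul h1 h2 (norm_nonneg _)
        (div_nonneg (Finset.prod_nonneg fun j _ => add_nonneg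
          (add_nonneg (norm_nonneg _) hr.le) (Nat.cast_nonneg _)) hfac.le)
    have key := Complex.differentiableOn_tsum_of_summable_norm husum hFdiff
      Metric.isOpen_ball hFle
    exact (key.differentiableAt (Metric.isOpen_ball.mem_nhds
      (Metric.mem_ball_self hr))).differentiableWithinAt
end
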